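/- Let q be a prime power, h,k ≥ 1, and α ∈ F_{q^h}. The h × (hk) matrix M_α whose (s,i) entry (0 ≤ s ≤ h-1, 0 ≤ i ≤ hk-1) is α^{i·q^s} has rank h (i.e., its rows are linearly independent over F_{q^h}) if and only if α generates F_{q^h} over F_q, that is F_q(α) = F_{q^h}. -/

import Mathlib

open Polynomial

-- If α^(q^m) = α with m > 0, then [Fq(α) : Fq] ≤ m.
private lemma fixed_imp_le (Fq K : Type) [Field Fq] [Fintype Fq] [Field K] [Fintype K]
    [Algebra Fq K] (α : K) (m : ℕ) (hm : 0 < m)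
    (hfix : α ^ (Fintype.card Fq) ^ m = α) :
    Module.finrank Fq (IntermediateField.adjoin Fq {α}) ≤ m := by
  classical
  set q := Fintype.card Fq with hqdef
  have hq : 1 < q := Fintype.one_lt_card
  set p := ringChar Fq with hpdef
  haveI hp : Fact p.Prime := ⟨CharP.char_is_prime Fq p⟩
  obtain ⟨n, -, hn⟩ := FiniteField.card Fq p
  haveI : CharP K p := charP_of_injective_algebraMap (algebraMap Fq K).injective p
  haveI : ExpChar K p := ExpChar.prime hp.out
  set f : K →+* K := iterateFrobenius K p ((n : ℕ) * m) with hfdef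
  have hf : ∀ x : K, f x = x ^ q ^ m := by
    intro x
    rw [hfdef, iterateFrobenius_def, pow_mul, ← hn]
  -- the fixed subfield
  set E : IntermediateField Fq K :=
    Subfield.toIntermediateField (f.eqLocusField (RingHom.id K)) (by
      intro x
      show f (algebraMap Fq K x) = RingHom.id K (algebraMap Fq K x)
      rw [hf, RingHom.id_apply, ← map_pow, FiniteField.pow_card_pow]) with hEdef
  have hle : IntermediateField.adjoin Fq {α} ≤ E := by
    rw [IntermediateField.adjoin_le_iff]
    intro x hx
    rcases hx with rfl
    show f x = RingHom.id K x
    rw [hf, RingHom.id_apply, hfix]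
  -- counting
  have hcard : Fintype.card (IntermediateField.adjoin Fq {α}) =
      q ^ Module.finrank Fq (IntermediateField.adjoin Fq {α}) := Module.card_eq_pow_finrank
  have hPne : (X ^ q ^ m - X : K[X]) ≠ 0 :=
    FiniteField.X_pow_card_sub_X_ne_zero K (Nat.one_lt_pow hm.ne' hq)
  have hroot : ∀ x : K, x ∈ IntermediateField.adjoin Fq {α} →
      x ∈ (X ^ q ^ m - X : K[X]).roots.toFinset := by
    intro x hx
    have := hle hx
    have hx2 : f x = RingHom.id K x := this
    rw [hf, RingHom.id_apply] at hx2
    rw [Multiset.mem_toFinset, mem_roots hPne]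
    simp [hx2]
  have hinj : Function.Injective
      (fun x : IntermediateField.adjoin Fq {α} =>
        (⟨(x : K), hroot x x.2⟩ : ((X ^ q ^ m - X : K[X]).roots.toFinset))) := by
    intro a b hab
    exact Subtype.ext (Subtype.mk_eq_mk.mp hab)
  have hcard2 : Fintype.card (IntermediateField.adjoin Fq {α}) ≤
      Fintype.card ((X ^ q ^ m - X : K[X]).roots.toFinset) :=
    Fintype.card_le_of_injective _ hinj
  have hcard3 : Fintype.card ((X ^ q ^ m - X : K[X]).roots.toFinset) ≤ q ^ m := by
    rw [Fintype.card_coe]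
    calc (X ^ q ^ m - X : K[X]).roots.toFinset.card
        ≤ Multiset.card (X ^ q ^ m - X : K[X]).roots := Multiset.toFinset_card_le _
      _ ≤ (X ^ q ^ m - X : K[X]).natDegree := Polynomial.card_roots' _
      _ = q ^ m := FiniteField.X_pow_card_sub_X_natDegree_eq K (Nat.one_lt_pow hm.ne' hq)
  have : q ^ Module.finrank Fq (IntermediateField.adjoin Fq {α}) ≤ q ^ m := by
    rw [← hcard]; exact le_trans hcard2 hcard3
  exact (Nat.pow_le_pow_iff_right hq).mp this

/-- The rectangular q-Moore matrix of 1, α, …, α^{hk-1} has linearly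
independent rows over F_{q^h} iff α generates F_{q^h} over F_q. -/
theorem moore_matrix_rank_iff_generates
    (Fq K : Type) [Field Fq] [Fintype Fq] [Field K] [Fintype K] [Algebra Fq K]
    (h k : ℕ) (hh : 0 < h) (hk0 : 0 < k)
    (hrank : Module.finrank Fq K = h) (α : K) :
    LinearIndependent K
        (fun s : Fin h => fun i : Fin (h * k) =>
          α ^ ((i : ℕ) * (Fintype.card Fq) ^ (s : ℕ)))
      ↔ IntermediateField.adjoin Fq {α} = ⊤ := by
  classical
  set q := Fintype.card Fq with hqdef
  have hq : 1 < q := Fintype.one_lt_card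
  set E := IntermediateField.adjoin Fq {α} with hEdef
  letI : Fintype E := Fintype.ofFinite _
  haveI : FiniteDimensional Fq K := Module.finite_iff_finite.mpr inferInstance
  haveI : FiniteDimensional Fq E := Module.finite_iff_finite.mpr inferInstance
  set d := Module.finrank Fq E with hddef
  have hdh : d ≤ h := by
    rw [← hrank]
    exact Submodule.finrank_le (Subalgebra.toSubmodule E.toSubalgebra)
  have hd0 : 0 < d := Module.finrank_pos
  -- α is fixed by the d-th power of Frobenius
  have hxcard : Fintype.card E = q ^ d := Module.card_eq_pow_finrank
  have hfixd : α ^ q ^ d = α := by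
    have h1 := FiniteField.pow_card (⟨α, IntermediateField.mem_adjoin_simple_self Fq α⟩ : E)
    rw [hxcard] at h1
    have h2 := congrArg (Subtype.val) h1
    simpa using h2
  have hfixh : α ^ q ^ h = α := by
    have h1 := FiniteField.pow_card α
    rwa [Module.card_eq_pow_finrank (K := Fq) (V := K), hrank] at h1
  -- the nodes of the Vandermonde matrix
  set β : Fin h → K := fun s => α ^ q ^ (s : ℕ) with hβdef
  -- E = ⊤ ↔ d = h
  have htop : E = ⊤ ↔ d = h := by
    constructor
    · intro ht
      rw [hddef, ht, IntermediateField.finrank_top', hrank]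
    · intro hd
      have h1 : Subalgebra.toSubmodule E.toSubalgebra = ⊤ := by
        apply Submodule.eq_top_of_finrank_eq
        rw [hrank, ← hd]
        rfl
      ext x
      simp only [IntermediateField.mem_top, iff_true]
      have : x ∈ Subalgebra.toSubmodule E.toSubalgebra := h1 ▸ Submodule.mem_top
      exact this
  -- injectivity of β ↔ d = h
  have hinj_iff : Function.Injective β ↔ d = h := by
    constructor
    · intro hinj
      by_contra hne
      have hdlt : d < h := lt_of_le_of_ne hdh hne
      have : β ⟨0, hh⟩ = β ⟨d, hdlt⟩ := by
        simp only [hβdef, pow_zero, pow_one, hfixd]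
      have := hinj this
      simp only [Fin.mk.injEq] at this
      omega
    · intro hd
      have key : ∀ s t : Fin h, (s : ℕ) ≤ (t : ℕ) → β s = β t → (s : ℕ) = (t : ℕ) := by
        intro s t hst hβeq
        rcases eq_or_lt_of_le hst with heq | hlt
        · exact heq
        · exfalso
          have h1 : (α ^ q ^ (s : ℕ)) ^ q ^ (h - (t : ℕ)) =
              (α ^ q ^ (t : ℕ)) ^ q ^ (h - (t : ℕ)) := by
            rw [show α ^ q ^ (s : ℕ) = β s from rfl, show α ^ q ^ (t : ℕ) = β t from rfl, hβeq]
          rw [← pow_mul, ← pow_mul, ← pow_add, ← pow_add] at h1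
          have h2 : (t : ℕ) + (h - (t : ℕ)) = h := by omega
          rw [h2, hfixh] at h1
          have hmpos : 0 < (s : ℕ) + (h - (t : ℕ)) := by
            have := t.2; omega
          have hle := fixed_imp_le Fq K α ((s : ℕ) + (h - (t : ℕ))) hmpos h1
          rw [← hEdef, ← hddef, hd] at hle
          have := t.2
          omega
      intro s t hβeq
      rcases le_total (s : ℕ) (t : ℕ) with hle | hle
      · exact Fin.ext (key s t hle hβeq)
      · exact (Fin.ext (key t s hle hβeq.symm)).symm
  -- the family equals powers of β
  have hfam : (fun s : Fin h => fun i : Fin (h * k) => α ^ ((i : ℕ) * q ^ (s : ℕ)))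
      = fun s (i : Fin (h * k)) => β s ^ (i : ℕ) := by
    funext s i
    rw [mul_comm, pow_mul]
  -- linear independence ↔ injectivity of β
  have hLI_iff : LinearIndependent K
      (fun s : Fin h => fun i : Fin (h * k) => α ^ ((i : ℕ) * q ^ (s : ℕ)))
      ↔ Function.Injective β := by
    rw [hfam]
    constructor
    · intro hLI s t hβeq
      exact hLI.injective (by rw [hβeq])
    · intro hinj
      have hle' : h ≤ h * k := Nat.le_mul_of_pos_right h hk0
      have hV : LinearIndependent K (fun s : Fin h => (Matrix.vandermonde β) s) := by
        change LinearIndependent K (Matrix.vandermonde β).row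
        rw [Matrix.linearIndependent_rows_iff_isUnit, Matrix.isUnit_iff_isUnit_det,
          Matrix.det_vandermonde, isUnit_iff_ne_zero]
        rw [Finset.prod_ne_zero_iff]
        intro i _
        rw [Finset.prod_ne_zero_iff]
        intro j hj
        rw [sub_ne_zero]
        intro hji
        have := hinj hji.symm
        rw [this] at hj
        exact absurd (Finset.mem_Ioi.mp hj) (lt_irrefl _)
      apply LinearIndependent.of_comp (LinearMap.funLeft K K (Fin.castLE hle'))
      have : (LinearMap.funLeft K K (Fin.castLE hle')) ∘ (fun s i => β s ^ (i : ℕ))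
          = fun s : Fin h => (Matrix.vandermonde β) s := by
        funext s i
        rfl
      rw [this]
      exact hV
  rw [hLI_iff, hinj_iff]
  exact htop.symm
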